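/- Let r ∈ ℕ, n > 1, and 0 = d₀ < d₁ < ... < d_l with r^n > d_l. Let p₀,...,p_l be pairwise distinct primes each greater than r^n + d_l, and let a ∈ ℕ satisfy a ≡ pᵢ − dᵢ (mod pᵢ²) for each i. Then for every non-negative integer k and all i, j ∈ {0,...,l}, the prime p_j does not divide r^n + k·p·r + a + dᵢ, where p = p₀⋯p_l. -/

import Mathlib

open Fin.NatCast
theorem no_small_prime_divisors (r : ℕ) (n : ℕ) (hn : 1 < n) (l : ℕ)
    (d : Fin (l + 1) → ℕ) (hd0 : d 0 = 0) (hmono : StrictMono d)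
    (hrn : (d l : ℤ) < (r : ℤ) ^ n)
    (ps : Fin (l + 1) → ℕ) (hps : Function.Injective ps)
    (hprime : ∀ i, (ps i).Prime)
    (hlarge : ∀ i, (r : ℤ) ^ n + d l < ps i)
    (a : ℕ) (ha : ∀ i, (a : ℤ) ≡ (ps i : ℤ) - d i [ZMOD (ps i : ℤ) ^ 2]) :
    ∀ (k : ℕ) (i j : Fin (l + 1)),
      ¬ (ps j : ℤ) ∣ (r : ℤ) ^ n + (k : ℤ) * (∏ m, (ps m : ℤ)) * r + a + d i := by
  intro k i j hdvd
  have hPdvd : (ps j : ℤ) ∣ ∏ m, (ps m : ℤ) := Finset.dvd_prod_of_mem _ (Finset.mem_univ j)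
  -- from the congruence: p_j ∣ a + d j
  have hsq : ((ps j : ℤ) ^ 2 : ℤ) ∣ (a : ℤ) - ((ps j : ℤ) - d j) := Int.ModEq.dvd (ha j).symm
  have h1 : (ps j : ℤ) ∣ (a : ℤ) - ((ps j : ℤ) - d j) :=
    dvd_trans (dvd_pow_self _ two_ne_zero) hsq
  have hPad : (ps j : ℤ) ∣ (a : ℤ) + d j := by
    have := dvd_add h1 (dvd_refl (ps j : ℤ))
    have he : (a : ℤ) - ((ps j : ℤ) - d j) + (ps j : ℤ) = (a : ℤ) + d j := by ring
    rwa [he] at this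
  -- p_j divides k * P * r
  have h2 : (ps j : ℤ) ∣ (k : ℤ) * (∏ m, (ps m : ℤ)) * r :=
    Dvd.dvd.mul_right (Dvd.dvd.mul_left hPdvd _) _
  have h3 : (ps j : ℤ) ∣ (r : ℤ) ^ n + d i - d j := by
    have := (hdvd.sub h2).sub hPad
    have he : (r : ℤ) ^ n + (k : ℤ) * (∏ m, (ps m : ℤ)) * r + a + d i
        - (k : ℤ) * (∏ m, (ps m : ℤ)) * r - ((a : ℤ) + d j)
        = (r : ℤ) ^ n + d i - d j := by ring
    rwa [he] at this
  -- bounds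
  have hlast : ∀ m : Fin (l + 1), (d m : ℤ) ≤ (d l : ℤ) := by
    intro m
    have : d m ≤ d (l : Fin (l + 1)) := by
      apply hmono.monotone
      rw [Fin.le_def]
      simpa using Fin.is_le m
    exact_mod_cast this
  have hpos : 0 < (r : ℤ) ^ n + d i - d j := by
    have := hlast j
    have : (d j : ℤ) < (r : ℤ) ^ n := lt_of_le_of_lt this hrn
    have hdi : (0 : ℤ) ≤ d i := Int.ofNat_nonneg _
    linarith
  have hub : (r : ℤ) ^ n + d i - d j < (ps j : ℤ) := by
    have h4 := hlast i
    have h5 := hlarge j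
    have hdj : (0 : ℤ) ≤ d j := Int.ofNat_nonneg _
    linarith
  have := Int.le_of_dvd hpos h3
  linarith
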